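/- The probability that a uniformly random finset F of Fin I × Fin J with card F = I + J − 1 is a saturated fraction equals I^{J−1} · J^{I−1} / C(I·J, I+J−1), and this quantity tends to 0 as I and J tend to infinity; precisely, the function (I, J) ↦ (I^{J−1} · J^{I−1} : ℝ) / C(I·J, I+J−1) on ℕ × ℕ tends to 0 along the product filter atTop ×ˢ atTop. -/

import Mathlib

/-- The model row of a design point `(i, j)` under the simple effect model:
a `1` (for the grand mean), the indicators of the first `I - 1` row levels,
and the indicators of the first `J - 1` column levels. -/
def modelRow {I J : ℕ} (p : Fin I × Fin J) :
    ℝ × (Fin (I - 1) → ℝ) × (Fin (J - 1) → ℝ) :=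
  (1,
   fun a => if (p.1 : ℕ) = (a : ℕ) then 1 else 0,
   fun b => if (p.2 : ℕ) = (b : ℕ) then 1 else 0)

open Filter

namespace SatAux
open Matrix Finset
set_option linter.unusedSectionVars false
set_option maxHeartbeats 1000000

def Xdes (I J : ℕ) : Matrix (Fin I × Fin J) (Fin I ⊕ Fin (J - 1)) ℝ :=
  Matrix.of fun p c => Sum.elim (fun a : Fin I => if (p.1 : ℕ) = (a : ℕ) then 1 else 0)
    (fun b : Fin (J - 1) => if (p.2 : ℕ) = (b : ℕ) then 1 else 0) c

lemma sum_ind {n : ℕ} (x : Fin n) :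
    ∑ i : Fin n, (if (i : ℕ) = (x : ℕ) then (1 : ℝ) else 0) = 1 := by
  have : ∀ i : Fin n, (if (i : ℕ) = (x : ℕ) then (1 : ℝ) else 0)
      = if i = x then (1 : ℝ) else 0 := by
    intro i; congr 1; simp [Fin.ext_iff]
  rw [Finset.sum_congr rfl (fun i _ => this i), Finset.sum_ite_eq' Finset.univ x fun _ => (1:ℝ)]
  simp

/-- The linear map turning a design-matrix row into a model row. -/
def Lmap (I J : ℕ) :
    ((Fin I ⊕ Fin (J - 1)) → ℝ) →ₗ[ℝ] (ℝ × (Fin (I - 1) → ℝ) × (Fin (J - 1) → ℝ)) where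
  toFun v := (∑ a : Fin I, v (Sum.inl a),
    fun a => v (Sum.inl (Fin.castLE (Nat.sub_le I 1) a)),
    fun b => v (Sum.inr b))
  map_add' u v := by
    refine Prod.ext ?_ (Prod.ext ?_ ?_)
    · simp [Finset.sum_add_distrib]
    · funext a; simp
    · funext b; simp
  map_smul' c v := by
    refine Prod.ext ?_ (Prod.ext ?_ ?_)
    · simp [Finset.mul_sum]
    · funext a; simp
    · funext b; simp

lemma Lmap_ker (I J : ℕ) (hI : 2 ≤ I) : LinearMap.ker (Lmap I J) = ⊥ := by
  rw [LinearMap.ker_eq_bot']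
  intro v hv
  have h1 : ∑ a : Fin I, v (Sum.inl a) = 0 := congrArg Prod.fst hv
  have h2 : ∀ a : Fin (I - 1), v (Sum.inl (Fin.castLE (Nat.sub_le I 1) a)) = 0 :=
    fun a => congrFun (congrArg (fun x => x.2.1) hv) a
  have h3 : ∀ b : Fin (J - 1), v (Sum.inr b) = 0 :=
    fun b => congrFun (congrArg (fun x => x.2.2) hv) b
  have h2' : ∀ a : Fin I, (a : ℕ) < I - 1 → v (Sum.inl a) = 0 := by
    intro a ha
    have : a = Fin.castLE (Nat.sub_le I 1) ⟨(a : ℕ), ha⟩ := Fin.ext rfl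
    rw [this]; exact h2 _
  funext c
  rcases c with a | b
  · by_cases ha : (a : ℕ) < I - 1
    · exact h2' a ha
    · have halast : (a : ℕ) = I - 1 := by have := a.isLt; omega
      have := Finset.sum_eq_single a (fun a' _ hne => h2' a' (by
        have hlt := a'.isLt
        have : (a' : ℕ) ≠ (a : ℕ) := fun h => hne (Fin.ext h)
        omega)) (fun h => absurd (Finset.mem_univ a) h)
      rw [this] at h1
      exact h1
  · exact h3 b

lemma sum_ind_rev {n : ℕ} (x : Fin n) :
    ∑ i : Fin n, (if (x : ℕ) = (i : ℕ) then (1 : ℝ) else 0) = 1 := by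
  simpa [eq_comm] using sum_ind x

lemma modelRow_eq (I J : ℕ) (p : Fin I × Fin J) :
    modelRow p = Lmap I J (Xdes I J p) := by
  refine Prod.ext ?_ (Prod.ext ?_ ?_)
  · exact (sum_ind_rev p.1).symm
  · funext a
    simp [modelRow, Lmap, Xdes]
  · rfl

lemma li_iff (I J : ℕ) (hI : 2 ≤ I) (F : Finset (Fin I × Fin J)) :
    LinearIndependent ℝ (fun p : F => modelRow p.1) ↔
      LinearIndependent ℝ (fun p : F => Xdes I J p.1) := by
  have h : (fun p : F => modelRow p.1) = (Lmap I J) ∘ (fun p : F => Xdes I J p.1) :=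
    funext fun p => modelRow_eq I J p.1
  rw [h, LinearMap.linearIndependent_iff (Lmap I J) (Lmap_ker I J hI)]


section General

variable {P K : Type*} [Fintype P] [Fintype K] [DecidableEq P] [DecidableEq K] [Nonempty P]

open Classical in
noncomputable def selT (K : Type*) [Fintype K] {P : Type*} [Nonempty P] (F : Finset P) : K → P :=
  if h : Nonempty (K ≃ F) then fun c => ((Classical.choice h) c : P)
  else fun _ => Classical.arbitrary P

lemma selT_spec (F : Finset P) (h : F.card = Fintype.card K) :
    ∃ e : K ≃ F, selT K F = fun c => ↑(e c) := by
  have hne : Nonempty (K ≃ F) := ⟨Fintype.equivOfCardEq (by simp [Fintype.card_coe, h])⟩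
  refine ⟨Classical.choice hne, ?_⟩
  rw [selT, dif_pos hne]

lemma linearIndependent_iff_det_ne_zero (X : Matrix P K ℝ) (F : Finset P)
    (h : F.card = Fintype.card K) :
    LinearIndependent ℝ (fun p : F => X p) ↔ (X.submatrix (selT K F) id).det ≠ 0 := by
  obtain ⟨e, he⟩ := selT_spec (K := K) F h
  rw [← linearIndependent_equiv e (f := fun p : F => X p)]
  have h2 : (fun p : F => X p) ∘ e = fun c => (X.submatrix (selT K F) id) c := by
    funext c; ext j; simp [he]
  rw [h2]
  rw [show (fun c => (X.submatrix (selT K F) id) c) = (X.submatrix (selT K F) id).row from rfl]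
  rw [Matrix.linearIndependent_rows_iff_isUnit, Matrix.isUnit_iff_isUnit_det, isUnit_iff_ne_zero]

theorem gram_det (X : Matrix P K ℝ) :
    (Xᵀ * X).det =
      ∑ F ∈ Finset.univ.powersetCard (Fintype.card K),
        ((X.submatrix (selT K F) id).det) ^ 2 := by
  classical
  set T : (K → P) → ℝ :=
    fun φ => (∏ c, X (φ c) c) * (X.submatrix φ id).det with hT
  have step1 : (Xᵀ * X).det = ∑ φ : K → P, T φ := by
    rw [Matrix.det_apply']
    have h0 : ∀ σ : Equiv.Perm K, ∏ c, (Xᵀ * X) (σ c) c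
        = ∑ φ : K → P, ∏ c, (X (φ c) (σ c) * X (φ c) c) := by
      intro σ
      have := Finset.prod_univ_sum (fun _ : K => (Finset.univ : Finset P))
        (fun c p => X p (σ c) * X p c)
      simpa [Matrix.mul_apply, Matrix.transpose_apply] using this
    calc ∑ σ : Equiv.Perm K, ((Equiv.Perm.sign σ : ℤ) : ℝ) * ∏ c, (Xᵀ * X) (σ c) c
        = ∑ σ : Equiv.Perm K, ∑ φ : K → P,
            ((Equiv.Perm.sign σ : ℤ) : ℝ) * ∏ c, (X (φ c) (σ c) * X (φ c) c) := by
          refine Finset.sum_congr rfl fun σ _ => ?_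
          rw [h0 σ, Finset.mul_sum]
      _ = ∑ φ : K → P, ∑ σ : Equiv.Perm K,
            ((Equiv.Perm.sign σ : ℤ) : ℝ) * ∏ c, (X (φ c) (σ c) * X (φ c) c) :=
          Finset.sum_comm
      _ = ∑ φ : K → P, T φ := by
          refine Finset.sum_congr rfl fun φ _ => ?_
          have h1 : ∀ σ : Equiv.Perm K,
              ((Equiv.Perm.sign σ : ℤ) : ℝ) * ∏ c, (X (φ c) (σ c) * X (φ c) c)
              = (∏ c, X (φ c) c) *
                (((Equiv.Perm.sign σ : ℤ) : ℝ) * ∏ c, X (φ c) (σ c)) := by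
            intro σ
            rw [Finset.prod_mul_distrib]
            ring
          rw [Finset.sum_congr rfl (fun σ _ => h1 σ), ← Finset.mul_sum, hT]
          congr 1
          have : (X.submatrix φ id).det = ((X.submatrix φ id)ᵀ).det :=
            (Matrix.det_transpose _).symm
          rw [this, Matrix.det_apply']
          rfl
  rw [step1]
  have step2 : ∑ φ : K → P, T φ
      = ∑ φ ∈ Finset.univ.filter (fun φ : K → P => Function.Injective φ), T φ := by
    rw [← Finset.sum_filter_add_sum_filter_not Finset.univ
      (fun φ : K → P => Function.Injective φ) T]
    have : ∑ φ ∈ Finset.univ.filter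
        (fun φ : K → P => ¬Function.Injective φ), T φ = 0 := by
      refine Finset.sum_eq_zero fun φ hφ => ?_
      simp only [Finset.mem_filter] at hφ
      obtain ⟨a, b, hab, hne⟩ := Function.not_injective_iff.mp hφ.2
      have : (X.submatrix φ id).det = 0 := by
        refine Matrix.det_zero_of_row_eq hne ?_
        funext j
        simp [Matrix.submatrix_apply, hab]
      rw [hT]; dsimp only; rw [this, mul_zero]
    rw [this, add_zero]
  rw [step2]
  have step3 : ∑ φ ∈ Finset.univ.filter (fun φ : K → P => Function.Injective φ), T φ
      = ∑ F ∈ Finset.univ.powersetCard (Fintype.card K),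
          ∑ φ ∈ (Finset.univ.filter (fun φ : K → P => Function.Injective φ)).filter
            (fun φ => Finset.image φ Finset.univ = F), T φ := by
    refine (Finset.sum_fiberwise_of_maps_to ?_ T).symm
    intro φ hφ
    simp only [Finset.mem_filter] at hφ
    rw [Finset.mem_powersetCard_univ, Finset.card_image_of_injective _ hφ.2,
      Finset.card_univ]
  rw [step3]
  refine Finset.sum_congr rfl fun F hF => ?_
  have hFc : F.card = Fintype.card K := Finset.mem_powersetCard_univ.mp hF
  obtain ⟨e, he⟩ := selT_spec (K := K) F hFc
  have hmemF : ∀ c, selT K F c ∈ F := by intro c; rw [he]; exact (e c).2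
  have hinjsel : Function.Injective (selT K F) := by
    rw [he]; exact fun a b hab => e.injective (Subtype.ext hab)
  -- bijection between the fiber and Perm K
  have hmem : ∀ (φ : K → P), Finset.image φ Finset.univ = F → ∀ c, φ c ∈ F := by
    intro φ hφ c
    rw [← hφ]; exact Finset.mem_image_of_mem φ (Finset.mem_univ c)
  have hbij : ∑ φ ∈ (Finset.univ.filter (fun φ : K → P => Function.Injective φ)).filter
      (fun φ => Finset.image φ Finset.univ = F), T φ
      = ∑ τ : Equiv.Perm K, T (fun c => selT K F (τ c)) := by
    have hmemof : ∀ (φ : K → P), φ ∈ (Finset.univ.filter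
        (fun φ : K → P => Function.Injective φ)).filter
        (fun φ => Finset.image φ Finset.univ = F) → ∀ c, φ c ∈ F := by
      intro φ hφ c
      simp only [Finset.mem_filter] at hφ
      exact hmem φ hφ.2 c
    have hinjof : ∀ (φ : K → P), φ ∈ (Finset.univ.filter
        (fun φ : K → P => Function.Injective φ)).filter
        (fun φ => Finset.image φ Finset.univ = F) → Function.Injective φ := by
      intro φ hφ
      simp only [Finset.mem_filter] at hφ
      exact hφ.1.2
    refine Finset.sum_bij'
      (i := fun φ hφ => Equiv.ofBijective (fun c => e.symm ⟨φ c, hmemof φ hφ c⟩)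
        (Finite.injective_iff_bijective.mp (fun a b hab => hinjof φ hφ
          (congrArg Subtype.val (e.symm.injective hab)))))
      (j := fun τ _ => fun c => selT K F (τ c))
      (fun φ hφ => Finset.mem_univ _)
      ?_ ?_ ?_ ?_
    · -- hj : membership of selT ∘ τ in the fiber
      intro τ _
      simp only [Finset.mem_filter]
      refine ⟨⟨Finset.mem_univ _, hinjsel.comp τ.injective⟩, ?_⟩
      ext x
      simp only [Finset.mem_image, Finset.mem_univ, true_and]
      constructor
      · rintro ⟨c, rfl⟩; exact hmemF _
      · intro hx
        refine ⟨τ.symm (e.symm ⟨x, hx⟩), ?_⟩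
        rw [he]; simp
    · -- left_inv
      intro φ hφ
      funext c
      rw [he]; simp
    · -- right_inv
      intro τ _
      ext c
      simp only [Equiv.ofBijective_apply]
      rw [Equiv.symm_apply_eq]
      apply Subtype.ext
      simp [he]
    · -- h
      intro φ hφ
      have : (fun c => selT K F ((Equiv.ofBijective (fun c => e.symm ⟨φ c, hmemof φ hφ c⟩)
          (Finite.injective_iff_bijective.mp (fun a b hab => hinjof φ hφ
            (congrArg Subtype.val (e.symm.injective hab))))) c)) = φ := by
        funext c
        rw [he]; simp
      rw [this]
  rw [hbij]
  have hperm : ∀ τ : Equiv.Perm K, T (fun c => selT K F (τ c))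
      = (((Equiv.Perm.sign τ : ℤ) : ℝ) * ∏ c, X (selT K F (τ c)) c)
        * (X.submatrix (selT K F) id).det := by
    intro τ
    rw [hT]
    dsimp only
    have : (X.submatrix (fun c => selT K F (τ c)) id).det
        = ((Equiv.Perm.sign τ : ℤ) : ℝ) * (X.submatrix (selT K F) id).det :=
      Matrix.det_permute τ (X.submatrix (selT K F) id)
    rw [this]
    ring
  rw [Finset.sum_congr rfl (fun τ _ => hperm τ), ← Finset.sum_mul]
  have : ∑ τ : Equiv.Perm K, ((Equiv.Perm.sign τ : ℤ) : ℝ) * ∏ c, X (selT K F (τ c)) c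
      = (X.submatrix (selT K F) id).det := by
    rw [Matrix.det_apply']
    rfl
  rw [this, sq]


end General

lemma det_tu_fin : ∀ (n : ℕ) (cl : Fin n → Bool) (M : Matrix (Fin n) (Fin n) ℝ),
    (∀ r c, M r c = 0 ∨ M r c = 1) →
    (∀ r c c', cl c = cl c' → M r c = 1 → M r c' = 1 → c = c') →
    M.det = 0 ∨ M.det = 1 ∨ M.det = -1 := by
  intro n
  induction n with
  | zero =>
    intro cl M _ _
    right; left
    simp [Matrix.det_fin_zero]
  | succ n ih =>
    intro cl M h01 huniq
    by_cases hz : ∃ r, ∀ c, M r c = 0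
    · obtain ⟨r, hr⟩ := hz
      exact Or.inl (Matrix.det_eq_zero_of_row_eq_zero r hr)
    by_cases hone : ∃ r c₀, M r c₀ = 1 ∧ ∀ c, c ≠ c₀ → M r c = 0
    · obtain ⟨r, c₀, hc₀, hrest⟩ := hone
      set σ := Equiv.swap (0 : Fin (n+1)) r with hσ
      set M' := M.submatrix σ id with hM'
      have hdet : M'.det = ((Equiv.Perm.sign σ : ℤ) : ℝ) * M.det := Matrix.det_permute σ M
      have hrow0 : ∀ c, M' 0 c = M r c := by
        intro c; simp [hM', hσ, Matrix.submatrix_apply]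
      set N := M'.submatrix Fin.succ c₀.succAbove with hN
      have hsum : M'.det = (-1 : ℝ) ^ (c₀ : ℕ) * N.det := by
        rw [Matrix.det_succ_row_zero M']
        rw [Finset.sum_eq_single c₀]
        · rw [hrow0, hc₀]; ring
        · intro b _ hb; rw [hrow0, hrest b hb]; ring
        · intro h; exact absurd (Finset.mem_univ c₀) h
      have hminor : N.det = 0 ∨ N.det = 1 ∨ N.det = -1 := by
        apply ih (cl ∘ c₀.succAbove)
        · intro r' c'; exact h01 _ _
        · intro r' c c' hcl h1 h2
          exact Fin.succAbove_right_injective (huniq _ _ _ hcl h1 h2)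
      have hs : ((Equiv.Perm.sign σ : ℤ) : ℝ) = 1 ∨ ((Equiv.Perm.sign σ : ℤ) : ℝ) = -1 := by
        rcases Int.units_eq_one_or (Equiv.Perm.sign σ) with h | h <;> rw [h] <;> norm_num
      have hp : (-1 : ℝ) ^ (c₀ : ℕ) = 1 ∨ (-1 : ℝ) ^ (c₀ : ℕ) = -1 := by
        rcases Nat.even_or_odd (c₀ : ℕ) with h | h
        · exact Or.inl h.neg_one_pow
        · exact Or.inr h.neg_one_pow
      have hMdet : ((Equiv.Perm.sign σ : ℤ) : ℝ) * M.det = (-1 : ℝ) ^ (c₀ : ℕ) * N.det := by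
        rw [← hdet, hsum]
      rcases hs with h1 | h1 <;> rcases hp with h2 | h2 <;> rw [h1, h2] at hMdet <;>
        rcases hminor with h3 | h3 | h3 <;> rw [h3] at hMdet <;>
        first
          | (left; linarith)
          | (right; left; linarith)
          | (right; right; linarith)
    · -- every row has ≥ 2 nonzeros: one 1 in each class
      push_neg at hz hone
      have hboth : ∀ r, (∃ c, cl c = true ∧ M r c = 1) ∧ (∃ c, cl c = false ∧ M r c = 1) := by
        intro r
        obtain ⟨c₁, hc₁⟩ := hz r
        have h1 : M r c₁ = 1 := (h01 r c₁).resolve_left hc₁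
        obtain ⟨c₂, hne, hc₂0⟩ := hone r c₁ h1
        have h2 : M r c₂ = 1 := (h01 r c₂).resolve_left hc₂0
        have hcl : cl c₂ ≠ cl c₁ := fun h => hne (huniq r c₂ c₁ h h2 h1)
        cases hb : cl c₁ with
        | true => exact ⟨⟨c₁, hb, h1⟩, ⟨c₂, by simpa [hb] using hcl, h2⟩⟩
        | false => exact ⟨⟨c₂, by simpa [hb] using hcl, h2⟩, ⟨c₁, hb, h1⟩⟩
      have key : ∀ (r : Fin (n+1)) (v : Bool), (∃ c, cl c = v ∧ M r c = 1) →
          ∑ c ∈ Finset.univ.filter (fun c => cl c = v), M r c = 1 := by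
        intro r v ⟨c₀, hcl₀, h1₀⟩
        rw [Finset.sum_eq_single_of_mem c₀ (by simp [hcl₀])]
        · exact h1₀
        · intro b hb hbne
          rcases h01 r b with h | h
          · exact h
          · exact absurd (huniq r b c₀ (by simp at hb; rw [hb, hcl₀]) h h1₀) hbne
      left
      rw [← Matrix.exists_mulVec_eq_zero_iff]
      refine ⟨fun c => if cl c then 1 else -1, ?_, ?_⟩
      · intro h0
        have := congrFun h0 0
        by_cases hb : cl 0 <;> simp [hb] at this
      · funext r
        have hsplit := Finset.sum_filter_add_sum_filter_not Finset.univ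
          (fun c => cl c = true) (fun c => M r c * (if cl c then 1 else -1))
        have e1 : ∑ c ∈ Finset.univ.filter (fun c => cl c = true),
            M r c * (if cl c then 1 else -1) = 1 := by
          rw [Finset.sum_congr rfl (fun c hc => by
            simp only [Finset.mem_filter] at hc
            rw [if_pos hc.2, mul_one])]
          exact key r true (hboth r).1
        have e2 : ∑ c ∈ Finset.univ.filter (fun c => ¬(cl c = true)),
            M r c * (if cl c then 1 else -1) = -1 := by
          rw [Finset.sum_congr rfl (fun c hc => by
            simp only [Finset.mem_filter, Bool.not_eq_true] at hc
            rw [if_neg (by simp [hc.2]), mul_neg_one])]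
          rw [Finset.sum_neg_distrib]
          have hfe : Finset.univ.filter (fun c => ¬(cl c = true)) =
              Finset.univ.filter (fun c : Fin (n+1) => cl c = false) := by
            ext c; simp [Bool.not_eq_true]
          rw [hfe, key r false (hboth r).2]
        simp only [Matrix.mulVec, dotProduct, Pi.zero_apply]
        rw [← hsplit, e1, e2]
        norm_num

lemma det_tu {n : Type*} [Fintype n] [DecidableEq n] (cl : n → Bool) (M : Matrix n n ℝ)
    (h01 : ∀ r c, M r c = 0 ∨ M r c = 1)
    (huniq : ∀ r c c', cl c = cl c' → M r c = 1 → M r c' = 1 → c = c') :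
    M.det = 0 ∨ M.det = 1 ∨ M.det = -1 := by
  let e := Fintype.equivFin n
  have : M.det = (M.submatrix e.symm e.symm).det := (Matrix.det_submatrix_equiv_self e.symm M).symm
  rw [this]
  apply det_tu_fin _ (cl ∘ e.symm)
  · intro r c; exact h01 _ _
  · intro r c c' hcl h1 h2
    exact e.symm.injective (huniq _ _ _ hcl h1 h2)


lemma Xdes_01 (I J : ℕ) (p : Fin I × Fin J) (c : Fin I ⊕ Fin (J - 1)) :
    Xdes I J p c = 0 ∨ Xdes I J p c = 1 := by
  rcases c with a | b <;> simp only [Xdes, Matrix.of_apply, Sum.elim_inl, Sum.elim_inr] <;>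
    split <;> simp

lemma Xdes_row_uniq (I J : ℕ) (p : Fin I × Fin J) (c c' : Fin I ⊕ Fin (J - 1))
    (hcl : c.isLeft = c'.isLeft) (h1 : Xdes I J p c = 1) (h2 : Xdes I J p c' = 1) :
    c = c' := by
  rcases c with a | b <;> rcases c' with a' | b' <;> simp only [Sum.isLeft] at hcl
  · have ha : ((p.1 : ℕ) = (a : ℕ)) := by
      by_contra h; simp [Xdes, h] at h1
    have ha' : ((p.1 : ℕ) = (a' : ℕ)) := by
      by_contra h; simp [Xdes, h] at h2
    have : a = a' := Fin.ext (by omega)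
    rw [this]
  · simp at hcl
  · simp at hcl
  · have hb : ((p.2 : ℕ) = (b : ℕ)) := by
      by_contra h; simp [Xdes, h] at h1
    have hb' : ((p.2 : ℕ) = (b' : ℕ)) := by
      by_contra h; simp [Xdes, h] at h2
    have : b = b' := Fin.ext (by omega)
    rw [this]

section Gram

variable {I J : ℕ}

lemma sum_ind2 {n : ℕ} (x y : Fin n) :
    ∑ i : Fin n, (if (i : ℕ) = (x : ℕ) then (1 : ℝ) else 0)
      * (if (i : ℕ) = (y : ℕ) then (1 : ℝ) else 0) = if x = y then 1 else 0 := by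
  have : ∀ i : Fin n, (if (i : ℕ) = (x : ℕ) then (1 : ℝ) else 0)
      * (if (i : ℕ) = (y : ℕ) then (1 : ℝ) else 0)
      = if i = x then (if x = y then (1:ℝ) else 0) else 0 := by
    intro i
    by_cases h1 : i = x
    · subst h1
      by_cases h2 : i = y
      · subst h2; simp
      · simp [h2, Fin.ext_iff]
        intro h; exact absurd (Fin.ext h) h2
    · have : ¬((i : ℕ) = (x : ℕ)) := fun h => h1 (Fin.ext h)
      simp [h1, this]
  rw [Finset.sum_congr rfl (fun i _ => this i),
    Finset.sum_ite_eq' Finset.univ x fun _ => (if x = y then (1:ℝ) else 0)]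
  simp

lemma det_gram (hI : 2 ≤ I) (hJ : 2 ≤ J) :
    ((Xdes I J)ᵀ * Xdes I J).det = (I : ℝ) ^ (J - 1) * (J : ℝ) ^ (I - 1) := by
  classical
  have hJ0 : (J : ℝ) ≠ 0 := by
    have : 0 < J := by omega
    exact_mod_cast this.ne'
  set cb : Fin (J - 1) → Fin J := fun b => Fin.castLE (Nat.sub_le J 1) b with hcb
  have hcbv : ∀ b : Fin (J-1), ((cb b : ℕ)) = (b : ℕ) := fun b => rfl
  have hcbinj : Function.Injective cb := fun b b' h => Fin.ext (by
    have := congrArg (fun x : Fin J => (x : ℕ)) h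
    exact this)
  set ones : Matrix (Fin (J-1)) (Fin (J-1)) ℝ := Matrix.of fun _ _ => (1:ℝ) with hones
  set A : Matrix (Fin I) (Fin I) ℝ := (J : ℝ) • 1 with hA
  set B : Matrix (Fin I) (Fin (J-1)) ℝ := Matrix.of fun _ _ => (1:ℝ) with hB
  set C : Matrix (Fin (J-1)) (Fin I) ℝ := Matrix.of fun _ _ => (1:ℝ) with hC
  set D : Matrix (Fin (J-1)) (Fin (J-1)) ℝ := (I : ℝ) • 1 with hD
  have hrw : ∀ (j : Fin J) (b : Fin (J-1)),
      (if (j : ℕ) = (b : ℕ) then (1:ℝ) else 0) = (if (j : ℕ) = ((cb b : Fin J) : ℕ) then (1:ℝ) else 0) := by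
    intro j b; rw [hcbv]
  have hG : (Xdes I J)ᵀ * Xdes I J = Matrix.fromBlocks A B C D := by
    ext c d
    rcases c with a | b <;> rcases d with a' | b' <;>
      simp only [Matrix.mul_apply, Matrix.transpose_apply, Xdes, Matrix.of_apply,
        Sum.elim_inl, Sum.elim_inr, Matrix.fromBlocks_apply₁₁, Matrix.fromBlocks_apply₁₂,
        Matrix.fromBlocks_apply₂₁, Matrix.fromBlocks_apply₂₂, Fintype.sum_prod_type]
    · -- (inl a, inl a')
      have : ∀ i : Fin I, ∑ j : Fin J,
          (if (i : ℕ) = (a : ℕ) then (1:ℝ) else 0) * (if (i : ℕ) = (a' : ℕ) then (1:ℝ) else 0)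
          = (J : ℝ) * ((if (i : ℕ) = (a : ℕ) then (1:ℝ) else 0) * (if (i : ℕ) = (a' : ℕ) then (1:ℝ) else 0)) := by
        intro i
        rw [Finset.sum_const, Finset.card_univ, Fintype.card_fin, nsmul_eq_mul]
      rw [Finset.sum_congr rfl fun i _ => this i, ← Finset.mul_sum, sum_ind2]
      simp [hA, Matrix.smul_apply, Matrix.one_apply]
    · -- (inl a, inr b')
      rw [Finset.sum_congr rfl (fun i _ => Finset.sum_congr rfl fun j _ => by rw [hrw j b'])]
      have hinner : ∀ i : Fin I, (∑ j : Fin J,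
          (if (i : ℕ) = (a : ℕ) then (1:ℝ) else 0)
            * (if (j : ℕ) = ((cb b' : Fin J) : ℕ) then (1:ℝ) else 0))
          = (if (i : ℕ) = (a : ℕ) then (1:ℝ) else 0) := by
        intro i
        rw [← Finset.mul_sum, sum_ind (cb b'), mul_one]
      rw [Finset.sum_congr rfl fun i _ => hinner i, sum_ind]
      simp [hB]
    · -- (inr b, inl a')
      rw [Finset.sum_congr rfl (fun i _ => Finset.sum_congr rfl fun j _ => by rw [hrw j b])]
      have : ∀ i : Fin I, ∑ j : Fin J,
          (if (j : ℕ) = ((cb b : Fin J) : ℕ) then (1:ℝ) else 0) * (if (i : ℕ) = (a' : ℕ) then (1:ℝ) else 0)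
          = (∑ j : Fin J, (if (j : ℕ) = ((cb b : Fin J) : ℕ) then (1:ℝ) else 0))
            * (if (i : ℕ) = (a' : ℕ) then (1:ℝ) else 0) := by
        intro i; rw [Finset.sum_mul]
      rw [Finset.sum_congr rfl fun i _ => this i]
      rw [Finset.sum_congr rfl fun i _ => by rw [sum_ind (cb b), one_mul], sum_ind]
      simp [hC]
    · -- (inr b, inr b')
      rw [Finset.sum_congr rfl (fun i _ => Finset.sum_congr rfl fun j _ => by
        rw [hrw j b, hrw j b'])]
      have : ∀ i : Fin I, ∑ j : Fin J,
          (if (j : ℕ) = ((cb b : Fin J) : ℕ) then (1:ℝ) else 0)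
            * (if (j : ℕ) = ((cb b' : Fin J) : ℕ) then (1:ℝ) else 0)
          = if cb b = cb b' then (1:ℝ) else 0 := fun i => sum_ind2 (cb b) (cb b')
      rw [Finset.sum_congr rfl fun i _ => this i, Finset.sum_const, Finset.card_univ,
        Fintype.card_fin, nsmul_eq_mul]
      have : (if cb b = cb b' then (1:ℝ) else 0) = if b = b' then (1:ℝ) else 0 := by
        by_cases h : b = b'
        · simp [h]
        · rw [if_neg h, if_neg (fun hc => h (hcbinj hc))]
      rw [this]
      simp [hD, Matrix.smul_apply, Matrix.one_apply]
  rw [hG]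
  letI : Invertible A := ⟨(J : ℝ)⁻¹ • 1, by
      rw [hA, Matrix.smul_mul, Matrix.mul_smul, smul_smul, Matrix.mul_one,
        inv_mul_cancel₀ hJ0, one_smul], by
      rw [hA, Matrix.smul_mul, Matrix.mul_smul, smul_smul, Matrix.mul_one,
        mul_inv_cancel₀ hJ0, one_smul]⟩
  rw [Matrix.det_fromBlocks₁₁]
  have hinv : (⅟A : Matrix (Fin I) (Fin I) ℝ) = (J : ℝ)⁻¹ • 1 := rfl
  have hCB : C * B = (I : ℝ) • ones := by
    ext b b'
    simp [hC, hB, hones, Matrix.mul_apply]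
  have hSchur : D - C * ⅟A * B = (I : ℝ) • (1 - (J : ℝ)⁻¹ • ones) := by
    rw [hinv, Matrix.mul_smul, Matrix.mul_one, Matrix.smul_mul, hCB]
    ext c d
    by_cases h : c = d <;>
      simp [hD, hones, h, Matrix.smul_apply, Matrix.one_apply, Matrix.sub_apply] <;> ring
  rw [hSchur]
  have hdetA : A.det = (J : ℝ) ^ I := by
    rw [hA, Matrix.det_smul, Matrix.det_one, mul_one, Fintype.card_fin]
  have hrank1 : (1 : Matrix (Fin (J-1)) (Fin (J-1)) ℝ) - (J : ℝ)⁻¹ • ones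
      = 1 + Matrix.replicateCol Unit (fun _ => -(J : ℝ)⁻¹) * Matrix.replicateRow Unit (fun _ => (1:ℝ)) := by
    ext c d
    simp [hones, Matrix.replicateCol, Matrix.replicateRow, Matrix.mul_apply, sub_eq_add_neg]
  have hdet1 : ((1 : Matrix (Fin (J-1)) (Fin (J-1)) ℝ) - (J : ℝ)⁻¹ • ones).det
      = (J : ℝ)⁻¹ := by
    rw [hrank1, Matrix.det_one_add_replicateCol_mul_replicateRow]
    have : ((fun _ => (1:ℝ)) : Fin (J-1) → ℝ) ⬝ᵥ ((fun _ => -(J : ℝ)⁻¹) : Fin (J-1) → ℝ)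
        = -(((J - 1 : ℕ) : ℝ) * (J:ℝ)⁻¹) := by
      simp [dotProduct, Finset.sum_const, Finset.card_univ, Fintype.card_fin,
        nsmul_eq_mul]
      try ring
    rw [this]
    have hJc : ((J - 1 : ℕ) : ℝ) = (J : ℝ) - 1 := by
      have : 1 ≤ J := by omega
      push_cast [this]; ring
    rw [hJc]
    field_simp
    ring
  rw [hdetA, Matrix.det_smul, hdet1, Fintype.card_fin]
  have hIpow : (J:ℝ) ^ I = (J:ℝ) ^ (I - 1) * (J:ℝ) := by
    rw [← pow_succ]; congr 1; omega
  rw [hIpow]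
  field_simp

end Gram


lemma numerator_count (I J : ℕ) (hI : 2 ≤ I) (hJ : 2 ≤ J) :
    ((Nat.card {F : Finset (Fin I × Fin J) // F.card = I + J - 1 ∧
        LinearIndependent ℝ (fun p : F => modelRow p.1)}) : ℝ)
    = (I : ℝ) ^ (J - 1) * (J : ℝ) ^ (I - 1) := by
  classical
  haveI : Nonempty (Fin I × Fin J) := ⟨(⟨0, by omega⟩, ⟨0, by omega⟩)⟩
  rw [Nat.card_eq_fintype_card, Fintype.card_subtype]
  have hcardK : Fintype.card (Fin I ⊕ Fin (J - 1)) = I + J - 1 := by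
    simp only [Fintype.card_sum, Fintype.card_fin]; omega
  have hps : Finset.univ.powersetCard (Fintype.card (Fin I ⊕ Fin (J - 1))) =
      Finset.univ.filter (fun F : Finset (Fin I × Fin J) =>
        F.card = Fintype.card (Fin I ⊕ Fin (J - 1))) := by
    rw [Finset.powersetCard_eq_filter, Finset.powerset_univ]
  have hfilter : (Finset.univ.filter (fun F : Finset (Fin I × Fin J) =>
      F.card = I + J - 1 ∧ LinearIndependent ℝ (fun p : F => modelRow p.1)))
      = (Finset.univ.powersetCard (Fintype.card (Fin I ⊕ Fin (J - 1)))).filter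
          (fun F : Finset (Fin I × Fin J) =>
            LinearIndependent ℝ (fun p : F => modelRow p.1)) := by
    rw [hps, Finset.filter_filter, hcardK]
  rw [hfilter, Finset.card_filter]
  push_cast
  have hcongr : ∀ F ∈ Finset.univ.powersetCard (Fintype.card (Fin I ⊕ Fin (J - 1))),
      (if LinearIndependent ℝ (fun p : F => modelRow p.1) then (1:ℝ) else 0)
      = ((Xdes I J).submatrix (selT (Fin I ⊕ Fin (J - 1)) F) id).det ^ 2 := by
    intro F hF
    have hFc : F.card = Fintype.card (Fin I ⊕ Fin (J - 1)) :=
      Finset.mem_powersetCard_univ.mp hF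
    have hdet01 := det_tu (fun c : Fin I ⊕ Fin (J - 1) => c.isLeft)
      ((Xdes I J).submatrix (selT (Fin I ⊕ Fin (J - 1)) F) id)
      (fun r c => Xdes_01 I J _ c)
      (fun r c c' hcl h1 h2 => Xdes_row_uniq I J _ c c' hcl h1 h2)
    have hli : LinearIndependent ℝ (fun p : F => modelRow p.1) ↔
        ((Xdes I J).submatrix (selT (Fin I ⊕ Fin (J - 1)) F) id).det ≠ 0 :=
      (li_iff I J hI F).trans
        (linearIndependent_iff_det_ne_zero (Xdes I J) F hFc)
    by_cases hLI : LinearIndependent ℝ (fun p : F => modelRow p.1)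
    · rw [if_pos hLI]
      have hne := hli.mp hLI
      rcases hdet01 with h | h | h
      · exact absurd h hne
      · rw [h]; norm_num
      · rw [h]; norm_num
    · rw [if_neg hLI]
      have : ¬ (((Xdes I J).submatrix (selT (Fin I ⊕ Fin (J - 1)) F) id).det ≠ 0) :=
        fun h => hLI (hli.mpr h)
      rw [not_not.mp this]
      norm_num
  rw [Finset.sum_congr rfl hcongr, ← gram_det (Xdes I J), det_gram hI hJ]


lemma factorial_le_bound : ∀ n : ℕ, 1 ≤ n →
    (n.factorial : ℝ) * Real.exp 1 ^ (n - 1) ≤ (n : ℝ) ^ (n + 1) := by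
  intro n
  induction n with
  | zero => omega
  | succ n ih =>
    intro _
    rcases Nat.eq_zero_or_pos n with h | h
    · subst h; norm_num [Nat.factorial]
    · have ih' := ih h
      have hnR : (0:ℝ) < (n:ℝ) := by exact_mod_cast h
      have hkey : Real.exp 1 ≤ (((n:ℝ)+1)/(n:ℝ)) ^ (n+1) := by
        have hpos : (0:ℝ) < 1 - 1/((n:ℝ)+1) := by
          rw [sub_pos, div_lt_one (by positivity)]
          linarith
        have hx : Real.exp (1/((n:ℝ)+1)) ≤ ((n:ℝ)+1)/(n:ℝ) := by
          have hle := Real.add_one_le_exp (-(1/((n:ℝ)+1)))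
          have h1 : 1 - 1/((n:ℝ)+1) ≤ Real.exp (-(1/((n:ℝ)+1))) := by linarith
          calc Real.exp (1/((n:ℝ)+1)) = (Real.exp (-(1/((n:ℝ)+1))))⁻¹ := by
                rw [← Real.exp_neg, neg_neg]
            _ ≤ (1 - 1/((n:ℝ)+1))⁻¹ := by
                apply inv_anti₀ hpos h1
            _ = ((n:ℝ)+1)/(n:ℝ) := by
                rw [show (1 : ℝ) - 1/((n:ℝ)+1) = (n:ℝ)/((n:ℝ)+1) by field_simp; ring]
                rw [inv_div]
        calc Real.exp 1 = Real.exp (((n+1 : ℕ) : ℝ) * (1/((n:ℝ)+1))) := by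
              congr 1
              push_cast
              field_simp
          _ = Real.exp (1/((n:ℝ)+1)) ^ (n+1) := Real.exp_nat_mul _ (n+1)
          _ ≤ (((n:ℝ)+1)/(n:ℝ)) ^ (n+1) := by
              apply pow_le_pow_left₀ (Real.exp_pos _).le hx
      have hfac : ((n+1).factorial : ℝ) * Real.exp 1 ^ ((n+1) - 1)
          = ((n:ℝ)+1) * ((n.factorial : ℝ) * Real.exp 1 ^ (n-1)) * Real.exp 1 := by
        have hexp : Real.exp 1 ^ n = Real.exp 1 ^ (n-1) * Real.exp 1 := by
          rw [← pow_succ]; congr 1; omega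
        rw [Nat.add_sub_cancel, Nat.factorial_succ, hexp]
        push_cast
        ring
      rw [hfac]
      have hstep1 : ((n:ℝ)+1) * ((n.factorial : ℝ) * Real.exp 1 ^ (n-1)) * Real.exp 1
          ≤ ((n:ℝ)+1) * (n:ℝ)^(n+1) * Real.exp 1 := by
        have he := Real.exp_pos 1
        have h0 : (0:ℝ) ≤ (n:ℝ)+1 := by positivity
        nlinarith [ih', Real.exp_pos 1, mul_pos (mul_pos (by positivity : (0:ℝ) < (n:ℝ)+1) he) he]
      have hstep2 : ((n:ℝ)+1) * (n:ℝ)^(n+1) * Real.exp 1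
          ≤ ((n:ℝ)+1) * (n:ℝ)^(n+1) * (((n:ℝ)+1)/(n:ℝ))^(n+1) := by
        apply mul_le_mul_of_nonneg_left hkey
        positivity
      have hstep3 : ((n:ℝ)+1) * (n:ℝ)^(n+1) * (((n:ℝ)+1)/(n:ℝ))^(n+1)
          = ((n:ℝ)+1)^(n+2) := by
        rw [div_pow]
        field_simp
        ring
      calc ((n:ℝ)+1) * ((n.factorial : ℝ) * Real.exp 1 ^ (n-1)) * Real.exp 1
          ≤ ((n:ℝ)+1) * (n:ℝ)^(n+1) * Real.exp 1 := hstep1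
        _ ≤ ((n:ℝ)+1) * (n:ℝ)^(n+1) * (((n:ℝ)+1)/(n:ℝ))^(n+1) := hstep2
        _ = ((n:ℝ)+1)^(n+2) := hstep3
        _ = (((n+1 : ℕ)):ℝ)^(n+1+1) := by push_cast; ring

lemma am_pow_bound (A B : ℕ) (hA : 1 ≤ A) (hB : 1 ≤ B) :
    (((A:ℝ)+(B:ℝ))/2) ^ (A+B) ≤ (A:ℝ)^A * (B:ℝ)^B := by
  set a := (A:ℝ) with ha
  set b := (B:ℝ) with hb
  have haP : (0:ℝ) < a := by rw [ha]; exact_mod_cast hA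
  have hbP : (0:ℝ) < b := by rw [hb]; exact_mod_cast hB
  set m := (a+b)/2 with hm
  have hmP : (0:ℝ) < m := by rw [hm]; positivity
  have key : ∀ (c : ℝ) (C : ℕ), 0 < c → c = (C:ℝ) → m ^ C ≤ c^C * Real.exp (m - c) := by
    intro c C hc hcC
    have h1 : m ≤ c * Real.exp ((m - c)/c) := by
      have := Real.add_one_le_exp ((m - c)/c)
      have h2 : c * ((m-c)/c + 1) ≤ c * Real.exp ((m-c)/c) :=
        mul_le_mul_of_nonneg_left this hc.le
      have h3 : c * ((m-c)/c + 1) = m := by field_simp; ring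
      linarith
    calc m ^ C ≤ (c * Real.exp ((m - c)/c)) ^ C := pow_le_pow_left₀ hmP.le h1 C
      _ = c^C * (Real.exp ((m-c)/c)) ^ C := mul_pow _ _ _
      _ = c^C * Real.exp ((C:ℝ) * ((m-c)/c)) := by rw [Real.exp_nat_mul]
      _ = c^C * Real.exp (m - c) := by
          rw [← hcC]
          congr 1
          field_simp
  have k1 := key a A haP ha
  have k2 := key b B hbP hb
  have : m ^ (A+B) = m^A * m^B := pow_add m A B
  rw [this]
  have hcomb : m^A * m^B ≤ (a^A * Real.exp (m - a)) * (b^B * Real.exp (m - b)) := by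
    apply mul_le_mul k1 k2 (by positivity) (by positivity)
  have hzero : Real.exp (m - a) * Real.exp (m - b) = 1 := by
    rw [← Real.exp_add]
    rw [show m - a + (m - b) = 0 by rw [hm]; ring]
    exact Real.exp_zero
  calc m^A * m^B ≤ (a^A * Real.exp (m - a)) * (b^B * Real.exp (m - b)) := hcomb
    _ = a^A * b^B * (Real.exp (m - a) * Real.exp (m - b)) := by ring
    _ = a^A * b^B := by rw [hzero, mul_one]

lemma q_lt_one : (21/10) * Real.exp (1/10) / Real.exp 1 < 1 := by
  rw [div_lt_one (Real.exp_pos 1)]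
  have h10 : ((21:ℝ)/10 * Real.exp (1/10)) ^ 10 = (21/10)^10 * Real.exp 1 := by
    rw [mul_pow]
    congr 1
    rw [← Real.exp_nat_mul]
    norm_num
  have hd9 := Real.exp_one_gt_d9
  have hmain : ((21:ℝ)/10 * Real.exp (1/10)) ^ 10 < (Real.exp 1) ^ 10 := by
    rw [h10, pow_succ]
    have h9 : ((21:ℝ)/10)^10 < (Real.exp 1)^9 := by
      calc ((21:ℝ)/10)^10 < (2.7182818283:ℝ)^9 := by norm_num
        _ < (Real.exp 1)^9 := by
            apply pow_lt_pow_left₀ hd9 (by norm_num)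
            norm_num
    have he := Real.exp_pos 1
    calc ((21:ℝ)/10)^10 * Real.exp 1 < (Real.exp 1)^9 * Real.exp 1 :=
      mul_lt_mul_of_pos_right h9 he
      _ = (Real.exp 1)^9 * Real.exp 1 := rfl
  by_contra hcon
  push_neg at hcon
  have : (Real.exp 1) ^ 10 ≤ ((21:ℝ)/10 * Real.exp (1/10)) ^ 10 :=
    pow_le_pow_left₀ (Real.exp_pos 1).le hcon 10
  linarith

lemma q_nonneg : 0 ≤ (21/10 : ℝ) * Real.exp (1/10) / Real.exp 1 := by positivity


lemma choose_lower (A B : ℕ) :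
    ((A:ℝ)*(B:ℝ))^(A+B+1)
      ≤ ((((A+1)*(B+1)).choose (A+B+1)) : ℝ) * (((A+B+1).factorial) : ℝ) := by
  have hnat : (A*B)^(A+B+1) ≤ ((A+1)*(B+1)).choose (A+B+1) * (A+B+1).factorial := by
    have hexp : (A+1)*(B+1) = A*B + A + B + 1 := by ring
    have h1 : (A*B) ≤ (A+1)*(B+1) + 1 - (A+B+1) := by omega
    calc (A*B)^(A+B+1) ≤ ((A+1)*(B+1) + 1 - (A+B+1))^(A+B+1) :=
          Nat.pow_le_pow_left h1 _
      _ ≤ ((A+1)*(B+1)).descFactorial (A+B+1) := Nat.pow_sub_le_descFactorial _ _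
      _ = (A+B+1).factorial * ((A+1)*(B+1)).choose (A+B+1) :=
          Nat.descFactorial_eq_factorial_mul_choose _ _
      _ = ((A+1)*(B+1)).choose (A+B+1) * (A+B+1).factorial := Nat.mul_comm _ _
  exact_mod_cast hnat

lemma main_bound (A B : ℕ) (hA : 10 ≤ A) (hB : 10 ≤ B) :
    ((A+1 : ℕ):ℝ)^B * ((B+1 : ℕ):ℝ)^A / ((((A+1)*(B+1)).choose (A+B+1)) : ℝ)
      ≤ (((A+B+1 : ℕ)):ℝ)^2 * ((21/10) * Real.exp (1/10) / Real.exp 1)^(A+B) := by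
  have haP : (0:ℝ) < (A:ℝ) := by exact_mod_cast (by omega : 0 < A)
  have hbP : (0:ℝ) < (B:ℝ) := by exact_mod_cast (by omega : 0 < B)
  have ha10 : (10:ℝ) ≤ (A:ℝ) := by exact_mod_cast hA
  have hb10 : (10:ℝ) ≤ (B:ℝ) := by exact_mod_cast hB
  set a := (A:ℝ) with hadef
  set b := (B:ℝ) with hbdef
  set k := A+B+1 with hk
  set e1 := Real.exp 1 with he1
  set E := Real.exp ((1:ℝ)/10) with hE
  have he1P : (0:ℝ) < e1 := Real.exp_pos 1
  have hEP : (0:ℝ) < E := Real.exp_pos _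
  set q : ℝ := (21/10) * E / e1 with hq
  set kr : ℝ := ((k : ℕ) : ℝ) with hkr
  have hkrval : kr = a + b + 1 := by rw [hkr, hk]; push_cast; ring
  have hkrP : (0:ℝ) < kr := by rw [hkrval]; linarith
  have hCpos : (0:ℝ) < ((((A+1)*(B+1)).choose k) : ℝ) := by
    have : k ≤ (A+1)*(B+1) := by
      have hexp : (A+1)*(B+1) = A*B + A + B + 1 := by ring
      omega
    exact_mod_cast Nat.choose_pos this
  have hfactP : (0:ℝ) < ((k.factorial) : ℝ) := by exact_mod_cast k.factorial_pos
  have hab1 : (1:ℝ) ≤ a * b := by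
    rw [hadef, hbdef]
    have : (1:ℕ) ≤ A * B := Nat.one_le_iff_ne_zero.mpr (by positivity)
    exact_mod_cast this
  have habP : (0:ℝ) < (a*b)^k := by positivity
  have hN : (0:ℝ) ≤ ((A+1 : ℕ):ℝ)^B * ((B+1 : ℕ):ℝ)^A := by positivity
  -- Step 1
  have h1 : ((A+1 : ℕ):ℝ)^B * ((B+1 : ℕ):ℝ)^A / ((((A+1)*(B+1)).choose k) : ℝ)
      ≤ ((A+1 : ℕ):ℝ)^B * ((B+1 : ℕ):ℝ)^A * ((k.factorial) : ℝ) / (a*b)^k := by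
    rw [div_le_div_iff₀ hCpos habP]
    have hcl := choose_lower A B
    rw [← hk] at hcl
    calc ((A+1 : ℕ):ℝ)^B * ((B+1 : ℕ):ℝ)^A * (a*b)^k
        ≤ ((A+1 : ℕ):ℝ)^B * ((B+1 : ℕ):ℝ)^A
            * (((((A+1)*(B+1)).choose k) : ℝ) * ((k.factorial) : ℝ)) :=
          mul_le_mul_of_nonneg_left hcl hN
      _ = ((A+1 : ℕ):ℝ)^B * ((B+1 : ℕ):ℝ)^A * ((k.factorial) : ℝ)
            * ((((A+1)*(B+1)).choose k) : ℝ) := by ring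
  -- Step 2 pieces
  have hpow_a : ((A+1 : ℕ):ℝ)^B ≤ a^B * E^B := by
    have hstep : ((A+1 : ℕ):ℝ) ≤ a * E := by
      have h0 := Real.add_one_le_exp ((1:ℝ)/a)
      have h2 : a * ((1:ℝ)/a + 1) ≤ a * Real.exp ((1:ℝ)/a) :=
        mul_le_mul_of_nonneg_left h0 haP.le
      have h3 : a * ((1:ℝ)/a + 1) = a + 1 := by field_simp; ring
      have h4 : Real.exp ((1:ℝ)/a) ≤ E := by
        rw [hE]
        apply Real.exp_le_exp.mpr
        rw [div_le_div_iff₀ haP (by norm_num)]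
        linarith
      have h5 : a * Real.exp ((1:ℝ)/a) ≤ a * E := mul_le_mul_of_nonneg_left h4 haP.le
      push_cast
      linarith
    calc ((A+1 : ℕ):ℝ)^B ≤ (a*E)^B := by
          apply pow_le_pow_left₀ (by positivity) hstep
      _ = a^B * E^B := mul_pow _ _ _
  have hpow_b : ((B+1 : ℕ):ℝ)^A ≤ b^A * E^A := by
    have hstep : ((B+1 : ℕ):ℝ) ≤ b * E := by
      have h0 := Real.add_one_le_exp ((1:ℝ)/b)
      have h2 : b * ((1:ℝ)/b + 1) ≤ b * Real.exp ((1:ℝ)/b) :=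
        mul_le_mul_of_nonneg_left h0 hbP.le
      have h3 : b * ((1:ℝ)/b + 1) = b + 1 := by field_simp; ring
      have h4 : Real.exp ((1:ℝ)/b) ≤ E := by
        rw [hE]
        apply Real.exp_le_exp.mpr
        rw [div_le_div_iff₀ hbP (by norm_num)]
        linarith
      have h5 : b * Real.exp ((1:ℝ)/b) ≤ b * E := mul_le_mul_of_nonneg_left h4 hbP.le
      push_cast
      linarith
    calc ((B+1 : ℕ):ℝ)^A ≤ (b*E)^A := by
          apply pow_le_pow_left₀ (by positivity) hstep
      _ = b^A * E^A := mul_pow _ _ _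
  have hfact : ((k.factorial) : ℝ) ≤ kr^(k+1) / e1^(A+B) := by
    have := factorial_le_bound k (by omega)
    rw [le_div_iff₀ (by positivity)]
    have hkm : k - 1 = A + B := by omega
    rw [← hkm]
    exact this
  -- assembled product bound
  have h2 : ((A+1 : ℕ):ℝ)^B * ((B+1 : ℕ):ℝ)^A * ((k.factorial) : ℝ)
      ≤ kr^2 * q^(A+B) * (a*b)^k := by
    have hstep1 : ((A+1 : ℕ):ℝ)^B * ((B+1 : ℕ):ℝ)^A * ((k.factorial) : ℝ)
        ≤ (a^B * E^B) * (b^A * E^A) * (kr^(k+1) / e1^(A+B)) := by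
      apply mul_le_mul (mul_le_mul hpow_a hpow_b (by positivity) (by positivity)) hfact
        (by positivity) (by positivity)
    refine hstep1.trans ?_
    have hkr21 : kr ≤ (21/10) * ((a+b)/2) := by
      rw [hkrval]; linarith
    have hmid : kr^(A+B) ≤ (21/10 : ℝ)^(A+B) * (a^A * b^B) := by
      calc kr^(A+B) ≤ ((21/10) * ((a+b)/2))^(A+B) :=
            pow_le_pow_left₀ hkrP.le hkr21 _
        _ = (21/10 : ℝ)^(A+B) * ((a+b)/2)^(A+B) := mul_pow _ _ _
        _ ≤ (21/10 : ℝ)^(A+B) * (a^A * b^B) := by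
            apply mul_le_mul_of_nonneg_left (am_pow_bound A B (by omega) (by omega))
            positivity
    have hqpow : q^(A+B) = (21/10 : ℝ)^(A+B) * E^(A+B) / e1^(A+B) := by
      rw [hq, div_pow, mul_pow]
    have hkp1 : kr^(k+1) = kr^2 * kr^(A+B) := by
      rw [← pow_add]
      congr 1
      omega
    calc (a^B * E^B) * (b^A * E^A) * (kr^(k+1) / e1^(A+B))
        = (a^B * b^A) * (E^(A+B)) * kr^2 * kr^(A+B) / e1^(A+B) := by
          rw [hkp1, pow_add]
          ring
      _ ≤ (a^B * b^A) * (E^(A+B)) * kr^2 * ((21/10 : ℝ)^(A+B) * (a^A * b^B)) / e1^(A+B) := by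
          gcongr
      _ = kr^2 * q^(A+B) * (a^B * b^A * (a^A * b^B)) := by
          rw [hqpow]
          ring
      _ ≤ kr^2 * q^(A+B) * (a^B * b^A * (a^A * b^B) * (a*b)) := by
          have hbase : (0:ℝ) ≤ kr^2 * q^(A+B) * (a^B * b^A * (a^A * b^B)) := by positivity
          nlinarith [hbase, hab1]
      _ = kr^2 * q^(A+B) * (a*b)^k := by
          rw [hk]
          ring
  refine h1.trans ?_
  rw [div_le_iff₀ habP]
  exact h2


open Filter Real in
lemma tendsto_zero :
    Tendsto (fun p : ℕ × ℕ =>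
        ((p.1 : ℝ) ^ (p.2 - 1) * (p.2 : ℝ) ^ (p.1 - 1)) /
          ((p.1 * p.2).choose (p.1 + p.2 - 1) : ℝ))
      (atTop ×ˢ atTop) (nhds 0) := by
  rw [Filter.prod_atTop_atTop_eq]
  set q : ℝ := (21/10) * Real.exp (1/10) / Real.exp 1 with hq
  have hq0 : 0 ≤ q := q_nonneg
  have hq1 : q < 1 := q_lt_one
  have habs : |q| < 1 := by rw [abs_of_nonneg hq0]; exact hq1
  have hg : Tendsto (fun n : ℕ => ((n:ℝ)+1)^2 * q^n) atTop (nhds 0) := by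
    have h2 := tendsto_pow_const_mul_const_pow_of_abs_lt_one 2 habs
    have h1 := tendsto_pow_const_mul_const_pow_of_abs_lt_one 1 habs
    have h0 := tendsto_pow_const_mul_const_pow_of_abs_lt_one 0 habs
    have heq : (fun n : ℕ => ((n:ℝ)+1)^2 * q^n)
        = fun n : ℕ => (n:ℝ)^2 * q^n + 2*((n:ℝ)^1 * q^n) + (n:ℝ)^0 * q^n := by
      funext n; ring
    rw [heq]
    have := (h2.add (h1.const_mul 2)).add h0
    simpa using this
  have hmap : Tendsto (fun p : ℕ × ℕ => p.1 + p.2 - 2) atTop atTop := by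
    apply Filter.tendsto_atTop_atTop.mpr
    intro b
    exact ⟨(b+2, 0), fun p hp => by
      have h1 : b + 2 ≤ p.1 := hp.1
      omega⟩
  have hcomp := hg.comp hmap
  apply squeeze_zero' ?_ ?_ hcomp
  · filter_upwards with p
    positivity
  · rw [Filter.eventually_atTop]
    refine ⟨(11, 11), fun p hp => ?_⟩
    have h1 : 11 ≤ p.1 := hp.1
    have h2 : 11 ≤ p.2 := hp.2
    obtain ⟨A, hAe⟩ : ∃ A, p.1 = A + 1 := ⟨p.1 - 1, by omega⟩
    obtain ⟨B, hBe⟩ : ∃ B, p.2 = B + 1 := ⟨p.2 - 1, by omega⟩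
    have hA10 : 10 ≤ A := by omega
    have hB10 : 10 ≤ B := by omega
    show _ ≤ (fun n : ℕ => ((n:ℝ)+1)^2 * q^n) ((fun p : ℕ × ℕ => p.1 + p.2 - 2) p)
    simp only
    rw [hAe, hBe]
    have hsub : (A+1) + (B+1) - 2 = A + B := by omega
    have hsub1 : (B+1) - 1 = B := by omega
    have hsub2 : (A+1) - 1 = A := by omega
    have hsub3 : (A+1) + (B+1) - 1 = A + B + 1 := by omega
    rw [hsub, hsub1, hsub2, hsub3]
    have hmb := main_bound A B hA10 hB10
    have hc : (((A+B : ℕ)):ℝ) + 1 = ((A+B+1 : ℕ):ℝ) := by push_cast; ring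
    rw [hc]
    exact hmb


end SatAux

/-- The probability that a uniformly random finset of `Fin I × Fin J` with
`I + J - 1` points is a saturated fraction equals
`I^(J-1) · J^(I-1) / C(I·J, I+J-1)`, and this quantity tends to `0` as `I` and `J`
tend to infinity (along the product filter `atTop ×ˢ atTop`). -/
theorem prob_saturated_eq_and_tendsto_zero :
    (∀ I J : ℕ, 2 ≤ I → 2 ≤ J →
      (Nat.card {F : Finset (Fin I × Fin J) //
          F.card = I + J - 1 ∧
          LinearIndependent ℝ (fun p : F => modelRow p.1)} : ℝ) /
        (Nat.card {F : Finset (Fin I × Fin J) // F.card = I + J - 1} : ℝ) =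
      ((I : ℝ) ^ (J - 1) * (J : ℝ) ^ (I - 1)) / ((I * J).choose (I + J - 1) : ℝ)) ∧
    Tendsto (fun p : ℕ × ℕ =>
        ((p.1 : ℝ) ^ (p.2 - 1) * (p.2 : ℝ) ^ (p.1 - 1)) /
          ((p.1 * p.2).choose (p.1 + p.2 - 1) : ℝ))
      (atTop ×ˢ atTop) (nhds 0) := by
  constructor
  · intro I J hI hJ
    have hnum := SatAux.numerator_count I J hI hJ
    have hden : ((Nat.card {F : Finset (Fin I × Fin J) // F.card = I + J - 1}) : ℝ)
        = (((I * J).choose (I + J - 1)) : ℝ) := by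
      congr 1
      rw [Nat.card_eq_fintype_card, Fintype.card_finset_len, Fintype.card_prod,
        Fintype.card_fin, Fintype.card_fin]
    rw [hnum, hden]
  · exact SatAux.tendsto_zero
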